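/- Let G be a connected interval graph of diameter d and maximum degree Δ. Then G has at most (d+1)·Δ + 1 vertices. In particular, an interval graph of diameter D has O(D·Δ) vertices. -/
import Mathlib


/-- A connected interval graph of diameter d and maximum degree Δ has at most
(d+1)·Δ + 1 vertices. -/
theorem interval_graph_card_le {V : Type*} [Fintype V] (G : SimpleGraph V)
    [DecidableRel G.Adj] (l r : V → ℝ) (hlr : ∀ v, l v ≤ r v)
    (hadj : ∀ v w, G.Adj v w ↔ v ≠ w ∧ l w ≤ r v ∧ l v ≤ r w)
    (hconn : G.Connected) (d Δ : ℕ)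
    (hdiam : ∀ u v : V, G.dist u v ≤ d)
    (hdeg : ∀ v : V, G.degree v ≤ Δ) :
    Fintype.card V ≤ (d + 1) * Δ + 1 := by
  classical
  obtain ⟨u0⟩ := hconn.nonempty
  obtain ⟨u, -, hu⟩ := Finset.exists_min_image Finset.univ l ⟨u0, Finset.mem_univ u0⟩
  obtain ⟨v, -, hv⟩ := Finset.exists_max_image Finset.univ r ⟨u0, Finset.mem_univ u0⟩
  obtain ⟨W, hW⟩ := (hconn u v).exists_walk_length_eq_dist
  -- every point c with l u ≤ c ≤ r v is covered by the interval of some walk vertex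
  have cover : ∀ {a b : V} (p : G.Walk a b) (c : ℝ), l a ≤ c → c ≤ r b →
      ∃ x ∈ p.support, l x ≤ c ∧ c ≤ r x := by
    intro a b p
    induction p with
    | nil => exact fun c h1 h2 => ⟨_, by simp, h1, h2⟩
    | @cons x y z h p ih =>
      intro c h1 h2
      by_cases hc : l y ≤ c
      · obtain ⟨t, ht, h3, h4⟩ := ih c hc h2
        exact ⟨t, by simp [ht], h3, h4⟩
      · refine ⟨x, by simp, h1, ?_⟩
        obtain ⟨-, h5, -⟩ := (hadj x y).1 h
        exact le_trans (le_of_not_ge hc) h5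
  -- every vertex on the walk other than its start is adjacent to some walk vertex
  have onpath : ∀ {a b : V} (p : G.Walk a b) (w : V), w ∈ p.support → w ≠ a →
      ∃ x ∈ p.support, G.Adj x w := by
    intro a b p
    induction p with
    | nil => intro w hw hne; simp at hw; exact absurd hw hne
    | @cons x y z h p ih =>
      intro w hw hne
      rw [SimpleGraph.Walk.support_cons, List.mem_cons] at hw
      rcases hw with hw | hw
      · exact absurd hw hne
      · by_cases hwy : w = y
        · exact ⟨x, by simp, hwy ▸ h⟩
        · obtain ⟨t, ht, h3⟩ := ih w hw hwy
          exact ⟨t, by simp [ht], h3⟩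
  -- every vertex other than u is adjacent to some walk vertex
  have dom : ∀ w : V, w ≠ u → ∃ x ∈ W.support, G.Adj x w := by
    intro w hne
    by_cases hws : w ∈ W.support
    · exact onpath W w hws hne
    · obtain ⟨x, hx, h3, h4⟩ := cover W (l w) (hu w (Finset.mem_univ w))
        (le_trans (hlr w) (hv w (Finset.mem_univ w)))
      refine ⟨x, hx, (hadj x w).2 ⟨?_, h4, le_trans h3 (hlr w)⟩⟩
      rintro rfl; exact hws hx
  -- counting
  have hsub : (Finset.univ : Finset V) ⊆
      insert u (W.support.toFinset.biUnion (fun x => G.neighborFinset x)) := by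
    intro w _
    by_cases hwu : w = u
    · simp [hwu]
    · obtain ⟨x, hx, h3⟩ := dom w hwu
      exact Finset.mem_insert_of_mem (Finset.mem_biUnion.2
        ⟨x, List.mem_toFinset.2 hx, (G.mem_neighborFinset x w).2 h3⟩)
  have hcard : W.support.toFinset.card ≤ d + 1 := by
    calc W.support.toFinset.card ≤ W.support.length := List.toFinset_card_le _
      _ = W.length + 1 := W.length_support
      _ ≤ d + 1 := by have := hdiam u v; omega
  calc Fintype.card V = Finset.univ.card := rfl
    _ ≤ (insert u (W.support.toFinset.biUnion (fun x => G.neighborFinset x))).card :=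
        Finset.card_le_card hsub
    _ ≤ (W.support.toFinset.biUnion (fun x => G.neighborFinset x)).card + 1 := by
        have := Finset.card_insert_le u (W.support.toFinset.biUnion fun x => G.neighborFinset x)
        omega
    _ ≤ (∑ x ∈ W.support.toFinset, (G.neighborFinset x).card) + 1 := by
        have := Finset.card_biUnion_le (s := W.support.toFinset)
          (t := fun x => G.neighborFinset x)
        omega
    _ ≤ W.support.toFinset.card * Δ + 1 := by
        have : (∑ x ∈ W.support.toFinset, (G.neighborFinset x).card) ≤
            W.support.toFinset.card * Δ := by
          apply Finset.sum_le_card_nsmul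
          intro x _
          exact hdeg x
        omega
    _ ≤ (d + 1) * Δ + 1 := by
        have := Nat.mul_le_mul_right Δ hcard
        omega
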